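/- arXiv:2509.09354 — 2 statements merged into one kernel-verified Lean document; each statement's English description precedes it below -/
import Mathlib

section
/- Let $\sigma$ be a Borel probability measure on $\mathbb{R}^n$ that is $(D,\beta)$-uniformly perfect with $D > 1$ and $\beta \in (0,1)$. Then $\sigma$ satisfies the Frostman condition $\sigma(B(x,r)) \le (2D)^s \operatorname{diam}(\operatorname{spt}\sigma)^{-s} \cdot r^s$ for all $x \in \mathbb{R}^n$ and $r > 0$, where $s = -\log\beta/\log D > 0$. -/
open MeasureTheory Metric

/-- The support of a measure: points all of whose balls have positive measure. -/
def spt {n : ℕ} (σ : Measure (EuclideanSpace ℝ (Fin n))) : Set (EuclideanSpace ℝ (Fin n)) :=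
  {x | ∀ r > 0, 0 < σ (ball x r)}

/-- `(D, β)`-uniformly perfect measure on `ℝ^n`. -/
def UniformlyPerfect {n : ℕ} (σ : Measure (EuclideanSpace ℝ (Fin n))) (D β : ℝ) : Prop :=
  0 < EMetric.diam (spt σ) ∧
    ∀ x r, 0 < r → ¬ spt σ ⊆ ball x (D * r) →
      σ (ball x r) ≤ ENNReal.ofReal β * σ (ball x (D * r))

/-- Iterating the uniformly perfect condition. -/
lemma up_iter {n : ℕ} (D β : ℝ) (hD : 0 < D) (σ : Measure (EuclideanSpace ℝ (Fin n)))
    (hσ : ∀ x r, 0 < r → ¬ spt σ ⊆ ball x (D * r) →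
      σ (ball x r) ≤ ENNReal.ofReal β * σ (ball x (D * r))) :
    ∀ k : ℕ, ∀ x, ∀ r : ℝ, 0 < r →
      (∀ j < k, ¬ spt σ ⊆ ball x (D * (D ^ j * r))) →
      σ (ball x r) ≤ ENNReal.ofReal β ^ k * σ (ball x (D ^ k * r)) := by
  intro k
  induction k with
  | zero => intro x r hr _; simp
  | succ k ih =>
    intro x r hr h
    have h0 : ¬ spt σ ⊆ ball x (D * r) := by
      have := h 0 (Nat.succ_pos k); simpa using this
    have step := hσ x r hr h0
    have hDr : 0 < D * r := mul_pos hD hr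
    have ihs := ih x (D * r) hDr (by
      intro j hj
      have := h (j + 1) (by omega)
      have e : D ^ (j + 1) * r = D ^ j * (D * r) := by ring
      rwa [e] at this)
    have e2 : D ^ k * (D * r) = D ^ (k + 1) * r := by ring
    rw [e2] at ihs
    calc σ (ball x r) ≤ ENNReal.ofReal β * σ (ball x (D * r)) := step
      _ ≤ ENNReal.ofReal β * (ENNReal.ofReal β ^ k * σ (ball x (D ^ (k + 1) * r))) := by
          exact mul_le_mul_right ihs _
      _ = ENNReal.ofReal β ^ (k + 1) * σ (ball x (D ^ (k + 1) * r)) := by ring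

/-- a `(D,β)`-uniformly perfect probability measure satisfies the Frostman
condition `σ(B(x,r)) ≤ (2D)^s diam(spt σ)^{-s} r^s` with `s = -log β / log D > 0`. -/
theorem uniformlyPerfect_frostman {n : ℕ} (D β : ℝ) (hD : 1 < D) (hβ0 : 0 < β) (hβ1 : β < 1)
    (σ : Measure (EuclideanSpace ℝ (Fin n))) [IsProbabilityMeasure σ]
    (hσ : UniformlyPerfect σ D β) :
    0 < -Real.log β / Real.log D ∧
      ∀ x, ∀ r > (0:ℝ),
        σ (ball x r) ≤ ENNReal.ofReal
          ((2 * D) ^ (-Real.log β / Real.log D)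
            * Metric.diam (spt σ) ^ (-(-Real.log β / Real.log D))
            * r ^ (-Real.log β / Real.log D)) := by
  obtain ⟨hdiam, hup⟩ := hσ
  have hD0 : (0:ℝ) < D := lt_trans one_pos hD
  set s : ℝ := -Real.log β / Real.log D with hs_def
  have hlogD : 0 < Real.log D := Real.log_pos hD
  have hlogβ : Real.log β < 0 := Real.log_neg hβ0 hβ1
  have hs : 0 < s := div_pos (by linarith) hlogD
  -- β = D ^ (-s)
  have hβ_eq : β = D ^ (-s) := by
    rw [Real.rpow_def_of_pos hD0]
    have : Real.log D * (-s) = Real.log β := by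
      rw [hs_def]; field_simp [hlogD.ne']
    rw [this, Real.exp_log hβ0]
  refine ⟨hs, ?_⟩
  -- the support is bounded
  have hbdd : ∃ x₀ : EuclideanSpace ℝ (Fin n), ∃ ρ : ℝ, spt σ ⊆ ball x₀ ρ := by
    by_contra hcon
    push_neg at hcon
    have hzero : ∀ x, ∀ r : ℝ, 0 < r → σ (ball x r) = 0 := by
      intro x r hr
      have hle : ∀ k : ℕ, σ (ball x r) ≤ ENNReal.ofReal β ^ k := by
        intro k
        have := up_iter D β hD0 σ hup k x r hr (fun j _ => hcon x _)
        calc σ (ball x r) ≤ ENNReal.ofReal β ^ k * σ (ball x (D ^ k * r)) := this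
          _ ≤ ENNReal.ofReal β ^ k * 1 := mul_le_mul_right prob_le_one _
          _ = ENNReal.ofReal β ^ k := mul_one _
      have htend : Filter.Tendsto (fun k : ℕ => ENNReal.ofReal β ^ k)
          Filter.atTop (nhds 0) :=
        ENNReal.tendsto_pow_atTop_nhds_zero_of_lt_one (ENNReal.ofReal_lt_one.2 hβ1)
      have : σ (ball x r) ≤ 0 := ge_of_tendsto' htend hle
      exact le_antisymm this bot_le
    have huniv : σ Set.univ = 0 := by
      rw [← Metric.iUnion_ball_nat_succ (0 : EuclideanSpace ℝ (Fin n))]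
      refine le_antisymm (le_trans (measure_iUnion_le _) ?_) bot_le
      have hz : ∀ i : ℕ, σ (ball (0 : EuclideanSpace ℝ (Fin n)) ((i:ℝ) + 1)) = 0 :=
        fun i => hzero 0 _ (by positivity)
      simp [hz]
    simp [measure_univ] at huniv
  obtain ⟨x₀, ρ, hsub⟩ := hbdd
  have hbdd' : Bornology.IsBounded (spt σ) := (isBounded_ball).subset hsub
  set d : ℝ := Metric.diam (spt σ) with hd_def
  have hd0 : 0 < d := by
    have hne := hbdd'.ediam_ne_top
    exact ENNReal.toReal_pos (ne_of_gt hdiam) hne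
  intro x r hr
  -- the RHS equals ((2*D*r)/d)^s
  have hrhs : (2 * D) ^ s * d ^ (-s) * r ^ s = ((2 * D * r) / d) ^ s := by
    rw [Real.div_rpow (by positivity) hd0.le, Real.mul_rpow (by positivity) hr.le,
      Real.rpow_neg hd0.le, div_eq_mul_inv]
    ring
  rw [hrhs]
  by_cases hcase : d ≤ 2 * D * r
  · -- trivial case : RHS ≥ 1
    have h1 : (1:ℝ) ≤ ((2 * D * r) / d) ^ s := by
      have : (1:ℝ) ≤ (2 * D * r) / d := (one_le_div hd0).2 hcase
      exact Real.one_le_rpow this hs.le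
    calc σ (ball x r) ≤ 1 := prob_le_one
      _ ≤ ENNReal.ofReal (((2 * D * r) / d) ^ s) := ENNReal.one_le_ofReal.2 h1
  · -- main case : 2 * D * r < d
    push_neg at hcase
    have hP : ∃ k : ℕ, d ≤ 2 * D * (D ^ k * r) := by
      obtain ⟨k, hk⟩ := pow_unbounded_of_one_lt (d / (2 * D * r)) hD
      exact ⟨k, by
        rw [div_lt_iff₀ (by positivity)] at hk
        nlinarith⟩
    classical
    set k : ℕ := Nat.find hP with hk_def
    have hk : d ≤ 2 * D * (D ^ k * r) := Nat.find_spec hP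
    have hj : ∀ j < k, 2 * D * (D ^ j * r) < d := by
      intro j hjk
      have := Nat.find_min hP hjk
      linarith [not_le.mp this]
    -- for j < k the support is not contained in the ball of radius D * (D^j * r)
    have hnsub : ∀ j < k, ¬ spt σ ⊆ ball x (D * (D ^ j * r)) := by
      intro j hjk hsub'
      have hdle : d ≤ 2 * (D * (D ^ j * r)) := by
        calc d ≤ Metric.diam (ball x (D * (D ^ j * r))) :=
              Metric.diam_mono hsub' isBounded_ball
          _ ≤ 2 * (D * (D ^ j * r)) := Metric.diam_ball (by positivity)
      have := hj j hjk
      nlinarith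
    have key := up_iter D β hD0 σ hup k x r hr hnsub
    have hkey2 : σ (ball x r) ≤ ENNReal.ofReal β ^ k := by
      calc σ (ball x r) ≤ ENNReal.ofReal β ^ k * σ (ball x (D ^ k * r)) := key
        _ ≤ ENNReal.ofReal β ^ k * 1 := mul_le_mul_right prob_le_one _
        _ = ENNReal.ofReal β ^ k := mul_one _
    -- β^k ≤ ((2*D*r)/d)^s
    have hreal : β ^ k ≤ ((2 * D * r) / d) ^ s := by
      have hDk : (0:ℝ) < D ^ k := by positivity
      have h1 : (D ^ k : ℝ)⁻¹ ≤ (2 * D * r) / d := by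
        rw [inv_eq_one_div, div_le_div_iff₀ hDk hd0]
        nlinarith
      have h2 : ((D ^ k : ℝ)⁻¹) ^ s ≤ ((2 * D * r) / d) ^ s :=
        Real.rpow_le_rpow (by positivity) h1 hs.le
      have h3 : ((D ^ k : ℝ)⁻¹) ^ s = β ^ k := by
        rw [hβ_eq, ← Real.rpow_natCast (D ^ (-s)) k, ← Real.rpow_mul hD0.le,
          ← Real.rpow_natCast D k, ← Real.rpow_neg hD0.le, ← Real.rpow_mul hD0.le]
        congr 1
        ring
      linarith [h2, h3.ge]
    calc σ (ball x r) ≤ ENNReal.ofReal β ^ k := hkey2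
      _ = ENNReal.ofReal (β ^ k) := (ENNReal.ofReal_pow hβ0.le k).symm
      _ ≤ ENNReal.ofReal (((2 * D * r) / d) ^ s) := ENNReal.ofReal_le_ofReal hreal
end

section
/- Let $\mathcal{R}$ be a finite family of pairwise disjoint rectangles in $\mathbb{R}^2$, each of dimensions $\delta \times \Delta$ ($\delta \le \Delta$), all parallel to a fixed rectangle $R_0$ of dimensions $\delta\times\Delta$, and all intersecting a fixed square $\mathbf{Q}$ of side length $\Delta$. Then the sumsets $\{x + y : x \in R,\ y \in R_0\}$, $R \in \mathcal{R}$, have overlap bounded by an absolute constant: every point of $\mathbb{R}^2$ lies in at most $C$ of these sumsets, for an absolute constant $C$. -/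
open Metric
open scoped Classical

/-- The rectangle of dimensions `δ × Δ` with sides in the orthonormal directions `e, f`,
anchored at the origin. -/
def rect (e f : EuclideanSpace ℝ (Fin 2)) (δ Δ : ℝ) : Set (EuclideanSpace ℝ (Fin 2)) :=
  {x | (inner ℝ x e : ℝ) ∈ Set.Icc 0 δ ∧ (inner ℝ x f : ℝ) ∈ Set.Icc 0 Δ}

/-- If the translates of `rect` by `t` and `t'` are disjoint and `t ≠ t'`, then the
inner ℝ product gaps cannot both be small. -/
lemma rect_gap (δ Δ : ℝ) (hδ : 0 < δ) (hΔ : 0 < Δ)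
    (e f : EuclideanSpace ℝ (Fin 2)) (he : ‖e‖ = 1) (hf : ‖f‖ = 1)
    (hef : (inner ℝ e f : ℝ) = 0)
    (t t' : EuclideanSpace ℝ (Fin 2))
    (hd : Disjoint {x | x - t ∈ rect e f δ Δ} {x | x - t' ∈ rect e f δ Δ})
    (h1 : |(inner ℝ t e : ℝ) - inner ℝ t' e| < δ)
    (h2 : |(inner ℝ t f : ℝ) - inner ℝ t' f| < Δ) : False := by
  set se : ℝ := (inner ℝ t' e : ℝ) - inner ℝ t e with hse
  set sf : ℝ := (inner ℝ t' f : ℝ) - inner ℝ t f with hsf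
  have hse1 : |se| < δ := by rw [hse, abs_sub_comm]; exact h1
  have hsf1 : |sf| < Δ := by rw [hsf, abs_sub_comm]; exact h2
  set a : ℝ := max 0 (-se) with ha
  set b : ℝ := max 0 (-sf) with hb
  have hee : (inner ℝ e e : ℝ) = 1 := by
    rw [real_inner_self_eq_norm_sq, he]; norm_num
  have hff : (inner ℝ f f : ℝ) = 1 := by
    rw [real_inner_self_eq_norm_sq, hf]; norm_num
  have hfe : (inner ℝ f e : ℝ) = 0 := by rw [real_inner_comm]; exact hef
  set x : EuclideanSpace ℝ (Fin 2) := t' + (a • e + b • f) with hx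
  have hz : x - t' = a • e + b • f := by rw [hx]; abel
  have hxe : (inner ℝ (x - t') e : ℝ) = a := by
    rw [hz, inner_add_left, real_inner_smul_left, real_inner_smul_left, hee, hfe]; ring
  have hxf : (inner ℝ (x - t') f : ℝ) = b := by
    rw [hz, inner_add_left, real_inner_smul_left, real_inner_smul_left, hff, hef]; ring
  have hxte : (inner ℝ (x - t) e : ℝ) = a + se := by
    have : x - t = (x - t') + (t' - t) := by abel
    rw [this, inner_add_left, hxe, inner_sub_left, hse]
  have hxtf : (inner ℝ (x - t) f : ℝ) = b + sf := by
    have : x - t = (x - t') + (t' - t) := by abel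
    rw [this, inner_add_left, hxf, inner_sub_left, hsf]
  have habs1 := abs_lt.mp hse1
  have habs2 := abs_lt.mp hsf1
  have hmem' : x ∈ {x | x - t' ∈ rect e f δ Δ} := by
    refine ⟨?_, ?_⟩ <;> rw [Set.mem_Icc]
    · rw [hxe]; constructor
      · exact le_max_left _ _
      · rcases le_or_gt se 0 with h | h
        · have : a = -se := by rw [ha, max_eq_right (by linarith)]
          linarith
        · have : a = 0 := by rw [ha, max_eq_left (by linarith)]
          linarith
    · rw [hxf]; constructor
      · exact le_max_left _ _
      · rcases le_or_gt sf 0 with h | h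
        · have : b = -sf := by rw [hb, max_eq_right (by linarith)]
          linarith
        · have : b = 0 := by rw [hb, max_eq_left (by linarith)]
          linarith
  have hmem : x ∈ {x | x - t ∈ rect e f δ Δ} := by
    refine ⟨?_, ?_⟩ <;> rw [Set.mem_Icc]
    · rw [hxte]; constructor
      · rcases le_or_gt se 0 with h | h
        · have : a = -se := by rw [ha, max_eq_right (by linarith)]
          linarith
        · have : a = 0 := by rw [ha, max_eq_left (by linarith)]
          linarith
      · rcases le_or_gt se 0 with h | h
        · have : a = -se := by rw [ha, max_eq_right (by linarith)]
          linarith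
        · have : a = 0 := by rw [ha, max_eq_left (by linarith)]
          linarith
    · rw [hxtf]; constructor
      · rcases le_or_gt sf 0 with h | h
        · have : b = -sf := by rw [hb, max_eq_right (by linarith)]
          linarith
        · have : b = 0 := by rw [hb, max_eq_left (by linarith)]
          linarith
      · rcases le_or_gt sf 0 with h | h
        · have : b = -sf := by rw [hb, max_eq_right (by linarith)]
          linarith
        · have : b = 0 := by rw [hb, max_eq_left (by linarith)]
          linarith
  exact Set.disjoint_left.mp hd hmem hmem'

/-- for a finite family of pairwise disjoint translates `R₀ + t`, `t ∈ Tr`,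
of a fixed `δ×Δ`-rectangle `R₀`, all meeting a fixed `Δ`-square, the sumsets
`{x + y : x ∈ R₀ + t, y ∈ R₀}` have overlap bounded by an absolute constant. -/
theorem sumsets_bounded_overlap :
    ∃ C : ℕ, ∀ (δ Δ : ℝ), 0 < δ → δ ≤ Δ →
      ∀ (e f : EuclideanSpace ℝ (Fin 2)), ‖e‖ = 1 → ‖f‖ = 1 → (inner ℝ e f : ℝ) = 0 →
      ∀ (q : EuclideanSpace ℝ (Fin 2)) (Tr : Finset (EuclideanSpace ℝ (Fin 2))),
        (∀ t ∈ Tr, ∀ t' ∈ Tr, t ≠ t' →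
          Disjoint {x | x - t ∈ rect e f δ Δ} {x | x - t' ∈ rect e f δ Δ}) →
        (∀ t ∈ Tr, ∃ x : EuclideanSpace ℝ (Fin 2), x - t ∈ rect e f δ Δ ∧
          ∀ i, x i ∈ Set.Icc (q i) (q i + Δ)) →
        ∀ p : EuclideanSpace ℝ (Fin 2),
          (Tr.filter (fun t => ∃ x ∈ rect e f δ Δ, ∃ y ∈ rect e f δ Δ,
            p = (x + t) + y)).card ≤ C := by
  refine ⟨18, ?_⟩
  intro δ Δ hδ hδΔ e f he hf hef q Tr hdisj hmeet p
  have hΔ : 0 < Δ := lt_of_lt_of_le hδ hδΔ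
  set S := Tr.filter (fun t => ∃ x ∈ rect e f δ Δ, ∃ y ∈ rect e f δ Δ,
      p = (x + t) + y) with hS
  set φ : EuclideanSpace ℝ (Fin 2) → ℤ × ℤ := fun t =>
    (⌊((inner ℝ t e : ℝ) - (inner ℝ p e : ℝ) + 2 * δ) / δ⌋,
     ⌊((inner ℝ t f : ℝ) - (inner ℝ q f : ℝ) + 3 * Δ) / Δ⌋) with hφ
  -- bounds on the e-coordinate for elements of S
  have hEb : ∀ t ∈ S, (inner ℝ p e : ℝ) - 2 * δ ≤ inner ℝ t e ∧ (inner ℝ t e : ℝ) ≤ inner ℝ p e := by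
    intro t ht
    obtain ⟨-, x, hx, y, hy, hp⟩ := Finset.mem_filter.mp ht
    have : (inner ℝ p e : ℝ) = inner ℝ x e + inner ℝ t e + inner ℝ y e := by
      rw [hp, inner_add_left, inner_add_left]
    obtain ⟨⟨hx1, hx2⟩, -⟩ := hx
    obtain ⟨⟨hy1, hy2⟩, -⟩ := hy
    constructor <;> linarith
  -- bounds on the f-coordinate for elements of Tr
  have hFb : ∀ t ∈ Tr, (inner ℝ q f : ℝ) - 3 * Δ ≤ inner ℝ t f ∧
      (inner ℝ t f : ℝ) ≤ inner ℝ q f + 2 * Δ := by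
    intro t ht
    obtain ⟨x, hxr, hxq⟩ := hmeet t ht
    have hkey : (inner ℝ t f : ℝ) = inner ℝ (x - q) f - inner ℝ (x - t) f + inner ℝ q f := by
      rw [inner_sub_left, inner_sub_left]; ring
    have hn : ‖x - q‖ ≤ 2 * Δ := by
      have hsum : ∑ i, ‖(x - q) i‖ ^ 2 ≤ (2 * Δ) ^ 2 := by
        have h0 := hxq 0
        have h1 := hxq 1
        rw [Set.mem_Icc] at h0 h1
        have e0 : (x - q) 0 = x 0 - q 0 := rfl
        have e1 : (x - q) 1 = x 1 - q 1 := rfl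
        rw [Fin.sum_univ_two, e0, e1, Real.norm_eq_abs, Real.norm_eq_abs,
          sq_abs, sq_abs]
        nlinarith [h0.1, h0.2, h1.1, h1.2]
      calc ‖x - q‖ = Real.sqrt (∑ i, ‖(x - q) i‖ ^ 2) := by
            rw [EuclideanSpace.norm_eq]
        _ ≤ Real.sqrt ((2 * Δ) ^ 2) := Real.sqrt_le_sqrt hsum
        _ = 2 * Δ := Real.sqrt_sq (by positivity)
    have hip : |(inner ℝ (x - q) f : ℝ)| ≤ 2 * Δ := by
      calc |(inner ℝ (x - q) f : ℝ)| ≤ ‖x - q‖ * ‖f‖ := abs_real_inner_le_norm _ _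
        _ = ‖x - q‖ := by rw [hf, mul_one]
        _ ≤ 2 * Δ := hn
    have hip' := abs_le.mp hip
    obtain ⟨-, h3, h4⟩ := hxr
    constructor <;> rw [hkey] <;> linarith [hip'.1, hip'.2]
  -- the grid map lands in a 3 × 6 grid
  have hmaps : ∀ t ∈ S, φ t ∈ Finset.Icc (0:ℤ) 2 ×ˢ Finset.Icc (0:ℤ) 5 := by
    intro t ht
    have htTr : t ∈ Tr := (Finset.mem_filter.mp ht).1
    obtain ⟨hE1, hE2⟩ := hEb t ht
    obtain ⟨hF1, hF2⟩ := hFb t htTr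
    rw [hφ, Finset.mem_product, Finset.mem_Icc, Finset.mem_Icc]
    refine ⟨⟨?_, ?_⟩, ?_, ?_⟩
    · exact Int.floor_nonneg.mpr (div_nonneg (by linarith) hδ.le)
    · have hu : ((inner ℝ t e : ℝ) - (inner ℝ p e : ℝ) + 2 * δ) / δ ≤ 2 := by
        rw [div_le_iff₀ hδ]; linarith
      calc ⌊((inner ℝ t e : ℝ) - (inner ℝ p e : ℝ) + 2 * δ) / δ⌋ ≤ ⌊(2:ℝ)⌋ :=
            Int.floor_le_floor hu
        _ = 2 := by norm_num
    · exact Int.floor_nonneg.mpr (div_nonneg (by linarith) hΔ.le)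
    · have hu : ((inner ℝ t f : ℝ) - (inner ℝ q f : ℝ) + 3 * Δ) / Δ ≤ 5 := by
        rw [div_le_iff₀ hΔ]; linarith
      calc ⌊((inner ℝ t f : ℝ) - (inner ℝ q f : ℝ) + 3 * Δ) / Δ⌋ ≤ ⌊(5:ℝ)⌋ :=
            Int.floor_le_floor hu
        _ = 5 := by norm_num
  -- injectivity on S
  have hinj : Set.InjOn φ S := by
    intro t ht t' ht' hφeq
    by_contra hne
    have htTr : t ∈ Tr := (Finset.mem_filter.mp ht).1
    have htTr' : t' ∈ Tr := (Finset.mem_filter.mp ht').1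
    have h1 : |(inner ℝ t e : ℝ) - inner ℝ t' e| < δ := by
      have h := Int.abs_sub_lt_one_of_floor_eq_floor (congrArg Prod.fst hφeq)
      have h' : |((inner ℝ t e : ℝ) - inner ℝ t' e) / δ| < 1 := by
        refine lt_of_eq_of_lt (congrArg (fun z : ℝ => |z|) ?_) h
        ring
      rwa [abs_div, abs_of_pos hδ, div_lt_one hδ] at h'
    have h2 : |(inner ℝ t f : ℝ) - inner ℝ t' f| < Δ := by
      have h := Int.abs_sub_lt_one_of_floor_eq_floor (congrArg Prod.snd hφeq)
      have h' : |((inner ℝ t f : ℝ) - inner ℝ t' f) / Δ| < 1 := by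
        refine lt_of_eq_of_lt (congrArg (fun z : ℝ => |z|) ?_) h
        ring
      rwa [abs_div, abs_of_pos hΔ, div_lt_one hΔ] at h'
    exact rect_gap δ Δ hδ hΔ e f he hf hef t t' (hdisj t htTr t' htTr' hne) h1 h2
  calc S.card ≤ (Finset.Icc (0:ℤ) 2 ×ˢ Finset.Icc (0:ℤ) 5).card :=
        Finset.card_le_card_of_injOn φ hmaps hinj
    _ = 18 := by
        rw [Finset.card_product, Int.card_Icc, Int.card_Icc]
        rfl
end
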